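/- Let A_ρ ⊆ M_n(ℂ) be a structural matrix algebra and let φ : A_ρ → M_n(ℂ) be an injective map satisfying φ(X ∘ Y) = φ(X) ∘ φ(Y) for all X, Y ∈ A_ρ, where ∘ is the normalized Jordan product. Then for every idempotent P ∈ A_ρ we have φ(I − P) = I − φ(P). -/

import Mathlib

/-- The structural matrix algebra determined by a quasi-order `ρ` on `Fin n`. -/
def structuralMatrixAlgebra {n : ℕ} (ρ : Fin n → Fin n → Prop) :
    Set (Matrix (Fin n) (Fin n) ℂ) :=
  {X | ∀ i j, ¬ ρ i j → X i j = 0}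

/-- The normalized Jordan product `X ∘ Y = (1/2)(XY + YX)`. -/
noncomputable def njord {n : ℕ} (X Y : Matrix (Fin n) (Fin n) ℂ) : Matrix (Fin n) (Fin n) ℂ :=
  (1 / 2 : ℂ) • (X * Y + Y * X)

open Matrix

variable {n : ℕ}

abbrev Mat (n : ℕ) := Matrix (Fin n) (Fin n) ℂ

lemma two_smul_cancel {x y : Mat n} (h : x + x = y + y) : x = y := by
  have h2 : (2:ℂ) • x = (2:ℂ) • y := by rw [two_smul, two_smul]; exact h
  calc x = ((1/2 : ℂ) * 2) • x := by norm_num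
  _ = (1/2:ℂ) • ((2:ℂ) • x) := by rw [mul_smul]
  _ = (1/2:ℂ) • ((2:ℂ) • y) := by rw [h2]
  _ = ((1/2:ℂ) * 2) • y := by rw [mul_smul]
  _ = y := by norm_num

lemma half_add_self' (x : Mat n) : (1/2 : ℂ) • (x + x) = x := by
  rw [← two_smul ℂ x, smul_smul]; norm_num

lemma unit_lemma {e x : Mat n} (he : e * e = e) (h : e * x + x * e = x + x) :
    e * x = x ∧ x * e = x := by
  have h1 : e * x + e * (x * e) = e * x + e * x := by
    have := congrArg (e * ·) h
    simpa [mul_add, ← mul_assoc, he] using this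
  have h1 : e * (x * e) = e * x := by exact add_left_cancel h1
  have h2 : e * (x * e) + x * e = x * e + x * e := by
    have := congrArg (· * e) h
    simpa [add_mul, mul_assoc, he] using this
  have h2 : e * (x * e) = x * e := by exact add_right_cancel h2
  have hcomm : e * x = x * e := by rw [← h1, h2]
  have : e * x = x := by
    apply two_smul_cancel
    rw [← h, hcomm]
  exact ⟨this, hcomm ▸ this⟩

lemma absorb_lemma {e x : Mat n} (he : e * e = e) (h : e * x + x * e = e + e) :
    e * x = e ∧ x * e = e := by
  have h1 : e * x + e * (x * e) = e + e := by
    have := congrArg (e * ·) h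
    simpa [mul_add, ← mul_assoc, he] using this
  have h2 : e * (x * e) + x * e = e + e := by
    have := congrArg (· * e) h
    simpa [add_mul, mul_assoc, he] using this
  have hcomm : e * x = x * e := by
    have := h1.trans h2.symm
    exact add_right_cancel (by rw [add_comm (e * (x*e))] at this; exact this)
  have : e * x = e := by
    apply two_smul_cancel
    rw [← h, hcomm]
  exact ⟨this, hcomm ▸ this⟩

lemma orth_lemma {q a : Mat n} (hq : q * q = q) (h : a * q + q * a = 0) :
    a * q = 0 ∧ q * a = 0 := by
  have h1 : q * (a * q) + q * a = 0 := by
    have := congrArg (q * ·) h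
    simpa [mul_add, ← mul_assoc, hq] using this
  have h2 : a * q + q * (a * q) = 0 := by
    have := congrArg (· * q) h
    simpa [add_mul, mul_assoc, hq] using this
  have hcomm : q * a = a * q := by
    have := h1.trans h2.symm
    rw [add_comm (a * q)] at this
    exact add_left_cancel this
  have : a * q = 0 := by
    apply two_smul_cancel
    rw [add_zero]
    calc a * q + a * q = a * q + q * a := by rw [hcomm]
    _ = 0 := by rw [h]
  exact ⟨this, by rw [hcomm, this]⟩

noncomputable def rk (P : Mat n) : ℕ := Module.finrank ℂ (LinearMap.range P.mulVecLin)

lemma mulVecLin_idem {P : Mat n} (hP : P * P = P) :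
    P.mulVecLin ∘ₗ P.mulVecLin = P.mulVecLin := by
  rw [← Matrix.mulVecLin_mul, hP]

lemma isProj_range {P : Mat n} (hP : P * P = P) :
    LinearMap.IsProj (LinearMap.range P.mulVecLin) P.mulVecLin := by
  constructor
  · intro x; exact LinearMap.mem_range_self _ x
  · rintro x ⟨y, rfl⟩
    have := congrArg (fun f => f y) (mulVecLin_idem hP)
    simpa using this

lemma toMatrix'_mulVecLin (P : Mat n) : LinearMap.toMatrix' P.mulVecLin = P := by
  rw [← Matrix.toLin'_apply', LinearMap.toMatrix'_toLin']

lemma trace_eq_rk {P : Mat n} (hP : P * P = P) : P.trace = (rk P : ℂ) := by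
  have h1 : LinearMap.trace ℂ (Fin n → ℂ) P.mulVecLin = (rk P : ℂ) := (isProj_range hP).trace
  rw [← h1, LinearMap.trace_eq_matrix_trace ℂ (Pi.basisFun ℂ (Fin n)),
    LinearMap.toMatrix_eq_toMatrix', toMatrix'_mulVecLin]

lemma rk_le (P : Mat n) : rk P ≤ n := by
  have := Submodule.finrank_le (LinearMap.range P.mulVecLin)
  simpa [rk, Module.finrank_pi] using this

lemma eq_zero_of_rk {P : Mat n} (h : rk P = 0) : P = 0 := by
  have hbot : LinearMap.range P.mulVecLin = ⊥ := Submodule.finrank_eq_zero.mp h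
  have h0 : P.mulVecLin = 0 := LinearMap.range_eq_bot.mp hbot
  apply Matrix.toLin'.injective
  rw [Matrix.toLin'_apply', h0, map_zero]

lemma eq_one_of_rk {P : Mat n} (hP : P * P = P) (h : rk P = n) : P = 1 := by
  have htop : LinearMap.range P.mulVecLin = ⊤ := by
    apply Submodule.eq_top_of_finrank_eq
    rw [Module.finrank_pi, Fintype.card_fin]; exact h
  have hid : P.mulVecLin = LinearMap.id := by
    apply LinearMap.ext; intro v
    have hv : v ∈ LinearMap.range P.mulVecLin := htop ▸ Submodule.mem_top
    obtain ⟨w, hw⟩ := hv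
    have := congrArg (fun f => f w) (mulVecLin_idem hP)
    simp only [LinearMap.comp_apply] at this
    rw [← hw]
    simpa using this
  apply Matrix.toLin'.injective
  rw [Matrix.toLin'_apply', hid, Matrix.toLin'_one]

lemma rk_pos_of_ne {P : Mat n} (h : P ≠ 0) : 1 ≤ rk P := by
  rcases Nat.eq_zero_or_pos (rk P) with h0 | h1
  · exact absurd (eq_zero_of_rk h0) h
  · exact h1

lemma sum_eq_one {ι : Type} [Fintype ι] (hcard : Fintype.card ι = n)
    (g : ι → Mat n) (hid : ∀ i, g i * g i = g i) (hnz : ∀ i, g i ≠ 0)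
    (horth : ∀ i j, i ≠ j → g i * g j = 0) : ∑ i, g i = 1 := by
  have hS : (∑ i, g i) * (∑ i, g i) = ∑ i, g i := by
    rw [Finset.sum_mul]
    apply Finset.sum_congr rfl
    intro i _
    rw [Finset.mul_sum, Finset.sum_eq_single i]
    · exact hid i
    · intro j _ hj; exact horth i j (Ne.symm hj)
    · intro h; exact absurd (Finset.mem_univ i) h
  have htr : (∑ i, g i).trace = ((∑ i, rk (g i) : ℕ) : ℂ) := by
    rw [Matrix.trace_sum]; push_cast
    exact Finset.sum_congr rfl fun i _ => trace_eq_rk (hid i)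
  have hrkS : rk (∑ i, g i) = ∑ i, rk (g i) := by
    have := (trace_eq_rk hS).symm.trans htr
    exact_mod_cast this
  have hge : n ≤ ∑ i, rk (g i) := by
    calc n = ∑ _i : ι, 1 := by simp [hcard]
    _ ≤ _ := Finset.sum_le_sum fun i _ => rk_pos_of_ne (hnz i)
  have : rk (∑ i, g i) = n := le_antisymm (rk_le _) (le_trans hge (le_of_eq hrkS.symm))
  exact eq_one_of_rk hS this


variable {ρ : Fin n → Fin n → Prop}

lemma sma_mul (htrans : ∀ i j k, ρ i j → ρ j k → ρ i k)
    {X Y : Mat n} (hX : X ∈ structuralMatrixAlgebra ρ) (hY : Y ∈ structuralMatrixAlgebra ρ) :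
    X * Y ∈ structuralMatrixAlgebra ρ := by
  intro i j hij
  rw [Matrix.mul_apply]
  apply Finset.sum_eq_zero
  intro k _
  by_cases h : ρ i k
  · rw [hY k j fun hkj => hij (htrans _ _ _ h hkj), mul_zero]
  · rw [hX i k h, zero_mul]

lemma sma_one (hrefl : ∀ i, ρ i i) : (1 : Mat n) ∈ structuralMatrixAlgebra ρ := by
  intro i j hij
  have hne : i ≠ j := fun h => hij (h ▸ hrefl i)
  exact Matrix.one_apply_ne hne

lemma sma_zero : (0 : Mat n) ∈ structuralMatrixAlgebra ρ := fun i j _ => rfl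

lemma sma_sub {X Y : Mat n} (hX : X ∈ structuralMatrixAlgebra ρ)
    (hY : Y ∈ structuralMatrixAlgebra ρ) : X - Y ∈ structuralMatrixAlgebra ρ := by
  intro i j hij
  rw [Matrix.sub_apply, hX i j hij, hY i j hij, sub_zero]

lemma sma_smul {c : ℂ} {X : Mat n} (hX : X ∈ structuralMatrixAlgebra ρ) :
    c • X ∈ structuralMatrixAlgebra ρ := by
  intro i j hij
  rw [Matrix.smul_apply, hX i j hij, smul_zero]

lemma sma_std (hrefl : ∀ i, ρ i i) (i : Fin n) :
    single i i (1 : ℂ) ∈ structuralMatrixAlgebra ρ := by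
  intro a b hab
  apply Matrix.single_apply_of_ne
  rintro ⟨rfl, rfl⟩
  exact hab (hrefl i)

lemma conj_std (P : Mat n) (i : Fin n) :
    single i i (1:ℂ) * P * single i i 1 = (P i i) • single i i 1 := by
  ext a b
  simp only [Matrix.mul_apply, Matrix.smul_apply, Matrix.single, Matrix.of_apply,
    ite_mul, mul_ite, one_mul, mul_one, zero_mul, mul_zero, smul_eq_mul]
  by_cases ha : i = a <;> by_cases hb : i = b <;> by_cases hab : a = b <;>
    simp_all [ite_and, Finset.sum_ite_eq, Finset.sum_ite_eq']

lemma trace_mul_std (P : Mat n) (i : Fin n) :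
    (P * single i i (1:ℂ)).trace = P i i := by
  rw [Matrix.trace]
  rw [Finset.sum_eq_single i]
  · rw [Matrix.diag_apply, Matrix.mul_single_apply_same, mul_one]
  · intro j _ hj
    rw [Matrix.diag_apply]
    exact Matrix.mul_single_apply_of_ne _ _ _ _ _ hj _
  · intro h; exact absurd (Finset.mem_univ i) h

lemma decomp (hrefl : ∀ i, ρ i i) (htrans : ∀ i j k, ρ i j → ρ j k → ρ i k) :
    ∀ (m : ℕ) (P : Mat n), P ∈ structuralMatrixAlgebra ρ → P * P = P → P.trace = (m : ℂ) →
    ∃ g : Fin m → Mat n, (∀ i, g i ∈ structuralMatrixAlgebra ρ) ∧ (∀ i, g i * g i = g i) ∧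
      (∀ i, g i ≠ 0) ∧ (∀ i j, i ≠ j → g i * g j = 0) ∧
      (∀ i, P * g i = g i) ∧ (∀ i, g i * P = g i) ∧ ∑ i, g i = P := by
  intro m
  induction m with
  | zero =>
    intro P hP hidem htr
    have hP0 : P = 0 := by
      apply eq_zero_of_rk
      have h2 := trace_eq_rk hidem
      rw [htr] at h2
      exact_mod_cast h2.symm
    subst hP0
    exact ⟨Fin.elim0, fun i => i.elim0, fun i => i.elim0, fun i => i.elim0,
      fun i j _ => i.elim0, fun i => i.elim0, fun i => i.elim0, by simp⟩
  | succ m ih =>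
    intro P hP hidem htr
    have hdiag : ∃ i, P i i ≠ 0 := by
      by_contra hcon
      push_neg at hcon
      have h0 : P.trace = 0 := Finset.sum_eq_zero fun i _ => hcon i
      rw [htr] at h0
      exact Nat.cast_ne_zero.mpr (Nat.succ_ne_zero m) h0
    obtain ⟨i, hi⟩ := hdiag
    set E := single i i (1:ℂ) with hE
    set c := P i i with hc
    set P₁ := c⁻¹ • (P * E * P) with hP₁def
    have hEPE : E * P * E = c • E := conj_std P i
    have key : (P*E*P)*(P*E*P) = c • (P*E*P) := by
      have e1 : (P*E*P)*(P*E*P) = P*E*(P*P)*(E*P) := by simp only [mul_assoc]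
      rw [e1, hidem]
      have e2 : P*E*P*(E*P) = P*(E*P*E)*P := by simp only [mul_assoc]
      rw [e2, hEPE, Matrix.mul_smul, Matrix.smul_mul]
    have hP₁idem : P₁ * P₁ = P₁ := by
      rw [hP₁def, Matrix.smul_mul, Matrix.mul_smul, smul_smul, key, smul_smul]
      congr 1
      field_simp
    have hPP₁ : P * P₁ = P₁ := by
      rw [hP₁def, Matrix.mul_smul]
      congr 1
      have e1 : P * (P*E*P) = (P*P)*E*P := by simp only [mul_assoc]
      rw [e1, hidem]
    have hP₁P : P₁ * P = P₁ := by
      rw [hP₁def, Matrix.smul_mul]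
      congr 1
      have e1 : P*E*P*P = P*E*(P*P) := by simp only [mul_assoc]
      rw [e1, hidem]
    have htrP₁ : P₁.trace = 1 := by
      rw [hP₁def, Matrix.trace_smul, smul_eq_mul]
      have e1 : (P*E*P).trace = (P*E).trace := by
        rw [Matrix.trace_mul_comm (P*E) P, ← mul_assoc, hidem]
      rw [e1, trace_mul_std, ← hc]
      exact inv_mul_cancel₀ hi
    have hP₁mem : P₁ ∈ structuralMatrixAlgebra ρ :=
      sma_smul (sma_mul htrans (sma_mul htrans hP (sma_std hrefl i)) hP)
    have hP₁ne : P₁ ≠ 0 := by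
      intro h
      rw [h, Matrix.trace_zero] at htrP₁
      exact zero_ne_one htrP₁
    set P' := P - P₁ with hP'def
    have hP'mem : P' ∈ structuralMatrixAlgebra ρ := sma_sub hP hP₁mem
    have hP'idem : P' * P' = P' := by
      rw [hP'def, sub_mul, mul_sub, mul_sub, hidem, hPP₁, hP₁P, hP₁idem, sub_self, sub_zero]
    have htrP' : P'.trace = (m:ℂ) := by
      rw [hP'def, Matrix.trace_sub, htr, htrP₁]
      push_cast; ring
    have hPP' : P * P' = P' := by rw [hP'def, mul_sub, hidem, hPP₁]
    have hP'P : P' * P = P' := by rw [hP'def, sub_mul, hidem, hP₁P]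
    have hP₁P' : P₁ * P' = 0 := by rw [hP'def, mul_sub, hP₁P, hP₁idem, sub_self]
    have hP'P₁ : P' * P₁ = 0 := by rw [hP'def, sub_mul, hPP₁, hP₁idem, sub_self]
    obtain ⟨g', hmem', hidem', hnz', horth', hPg', hgP', hsum'⟩ := ih P' hP'mem hP'idem htrP'
    have hP₁g : ∀ j, P₁ * g' j = 0 := fun j => by
      rw [← hPg' j, ← mul_assoc, hP₁P', zero_mul]
    have hgP₁ : ∀ j, g' j * P₁ = 0 := fun j => by
      rw [← hgP' j, mul_assoc, hP'P₁, mul_zero]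
    have hPg : ∀ j, P * g' j = g' j := fun j => by
      rw [← hPg' j, ← mul_assoc, hPP', hPg' j]
    have hgP : ∀ j, g' j * P = g' j := fun j => by
      rw [← hgP' j, mul_assoc, hP'P, hgP' j]
    refine ⟨Fin.cons P₁ g', ?_, ?_, ?_, ?_, ?_, ?_, ?_⟩
    · intro j
      refine Fin.cases ?_ ?_ j
      · simpa using hP₁mem
      · intro k; simpa using hmem' k
    · intro j
      refine Fin.cases ?_ ?_ j
      · simpa using hP₁idem
      · intro k; simpa using hidem' k
    · intro j
      refine Fin.cases ?_ ?_ j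
      · simpa using hP₁ne
      · intro k; simpa using hnz' k
    · intro a b hab
      induction a using Fin.cases with
      | zero =>
        induction b using Fin.cases with
        | zero => exact absurd rfl hab
        | succ b' => simpa using hP₁g b'
      | succ a' =>
        induction b using Fin.cases with
        | zero => simpa using hgP₁ a'
        | succ b' =>
          have hne : a' ≠ b' := fun h => hab (by rw [h])
          simpa using horth' a' b' hne
    · intro j
      refine Fin.cases ?_ ?_ j
      · simpa using hPP₁
      · intro k; simpa using hPg k
    · intro j
      refine Fin.cases ?_ ?_ j
      · simpa using hP₁P
      · intro k; simpa using hgP k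
    · rw [Fin.sum_cons, hsum', hP'def, add_sub_cancel]


lemma half_eq {z w : Mat n} (h : z = (1/2:ℂ) • w) : w = z + z := by
  have h2 : z + z = w := by
    rw [h, ← two_smul ℂ, smul_smul]; norm_num
  exact h2.symm

/-- An injective map on a structural matrix algebra preserving the
normalized Jordan product satisfies `φ(I − P) = I − φ(P)` for every idempotent `P`. -/
theorem jordan_mult_map_complement {n : ℕ} (ρ : Fin n → Fin n → Prop)
    (hrefl : ∀ i, ρ i i) (htrans : ∀ i j k, ρ i j → ρ j k → ρ i k)
    (φ : Matrix (Fin n) (Fin n) ℂ → Matrix (Fin n) (Fin n) ℂ)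
    (hinj : Set.InjOn φ (structuralMatrixAlgebra ρ))
    (hjord : ∀ X ∈ structuralMatrixAlgebra ρ, ∀ Y ∈ structuralMatrixAlgebra ρ,
      φ (njord X Y) = njord (φ X) (φ Y)) :
    ∀ P ∈ structuralMatrixAlgebra ρ, P * P = P → φ (1 - P) = 1 - φ P := by
  have h0 : (0 : Mat n) ∈ structuralMatrixAlgebra ρ := sma_zero
  have h1 : (1 : Mat n) ∈ structuralMatrixAlgebra ρ := sma_one hrefl
  -- transfer lemmas
  have idem_tr : ∀ X ∈ structuralMatrixAlgebra ρ, X * X = X → (φ X) * (φ X) = φ X := by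
    intro X hX hXi
    have hn : njord X X = X := by rw [njord, hXi]; exact half_add_self' X
    have h := hjord X hX X hX
    rw [hn, njord] at h
    exact two_smul_cancel (half_eq h)
  have zero_tr : ∀ X ∈ structuralMatrixAlgebra ρ, ∀ Y ∈ structuralMatrixAlgebra ρ,
      X * Y = 0 → Y * X = 0 → (φ X) * (φ Y) + (φ Y) * (φ X) = φ 0 + φ 0 := by
    intro X hX Y hY hXY hYX
    have hn : njord X Y = 0 := by rw [njord, hXY, hYX, add_zero, smul_zero]
    have h := hjord X hX Y hY
    rw [hn, njord] at h
    exact half_eq h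
  have unit_tr : ∀ X ∈ structuralMatrixAlgebra ρ, ∀ Y ∈ structuralMatrixAlgebra ρ,
      X * Y = Y → Y * X = Y → (φ X) * (φ Y) + (φ Y) * (φ X) = φ Y + φ Y := by
    intro X hX Y hY hXY hYX
    have hn : njord X Y = Y := by rw [njord, hXY, hYX]; exact half_add_self' Y
    have h := hjord X hX Y hY
    rw [hn, njord] at h
    exact half_eq h
  -- Step 1 : φ 0 = 0 and φ 1 = 1
  set z := φ 0 with hzdef
  have hz : z * z = z := idem_tr 0 h0 (by rw [mul_zero])
  set e := φ 1 with hedef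
  have he : e * e = e := idem_tr 1 h1 (one_mul 1)
  set f : Fin n → Mat n := fun i => φ (single i i 1) with hfdef
  have hfidem : ∀ i, f i * f i = f i := fun i =>
    idem_tr _ (sma_std hrefl i) (by rw [Matrix.single_mul_single_same, one_mul])
  have hzf : ∀ i, z * f i = z ∧ f i * z = z := fun i =>
    absorb_lemma hz (zero_tr 0 h0 _ (sma_std hrefl i) (zero_mul _) (mul_zero _))
  have horthf : ∀ i j, i ≠ j → f i * f j + f j * f i = z + z := by
    intro i j hij
    exact zero_tr _ (sma_std hrefl i) _ (sma_std hrefl j)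
      (Matrix.single_mul_single_of_ne _ _ _ _ hij _) (Matrix.single_mul_single_of_ne _ _ _ _ (Ne.symm hij) _)
  set f' : Fin n → Mat n := fun i => f i - z with hf'def
  have hf'idem : ∀ i, f' i * f' i = f' i := by
    intro i
    show (f i - z) * (f i - z) = f i - z
    rw [sub_mul, mul_sub, mul_sub, hfidem i, (hzf i).2, (hzf i).1, hz, sub_self, sub_zero]
  have hEnz : ∀ i : Fin n, single i i (1:ℂ) ≠ 0 := by
    intro i hcon
    have := congrFun (congrFun hcon i) i
    rw [Matrix.single_apply_same] at this
    exact one_ne_zero this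
  have hf'nz : ∀ i, f' i ≠ 0 := by
    intro i
    exact sub_ne_zero.mpr (hinj.ne (sma_std hrefl i) h0 (hEnz i))
  have hprod : ∀ i j, i ≠ j → f' i * f' j = f i * f j - z := by
    intro i j hij
    show (f i - z) * (f j - z) = f i * f j - z
    rw [sub_mul, mul_sub, mul_sub, (hzf i).2, (hzf j).1, hz, sub_self, sub_zero]
  have hf'orth : ∀ i j, i ≠ j → f' i * f' j = 0 := by
    intro i j hij
    refine (orth_lemma (hf'idem j) ?_).1
    rw [hprod i j hij, hprod j i (Ne.symm hij), sub_add_sub_comm, horthf i j hij, sub_self]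
  have hSone : ∑ i, f' i = 1 :=
    sum_eq_one (Fintype.card_fin n) f' hf'idem hf'nz hf'orth
  have hef : ∀ i, e * f i = f i ∧ f i * e = f i := fun i =>
    unit_lemma he (unit_tr 1 h1 _ (sma_std hrefl i) (one_mul _) (mul_one _))
  have hze : z * e = z ∧ e * z = z :=
    absorb_lemma hz (zero_tr 0 h0 1 h1 (zero_mul _) (mul_zero _))
  have he1 : e = 1 := by
    calc e = e * 1 := (mul_one e).symm
    _ = e * ∑ i, f' i := by rw [hSone]
    _ = ∑ i, e * f' i := Finset.mul_sum _ _ _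
    _ = ∑ i, f' i := Finset.sum_congr rfl fun i _ => by
        show e * (f i - z) = f i - z
        rw [mul_sub, (hef i).1, hze.2]
    _ = 1 := hSone
  have hz0 : z = 0 := by
    have : z = z * ∑ i, f' i := by rw [hSone, mul_one]
    rw [Finset.mul_sum] at this
    calc z = ∑ i, z * f' i := this
    _ = ∑ _i : Fin n, (0 : Mat n) := Finset.sum_congr rfl fun i _ => by
        show z * (f i - z) = 0
        rw [mul_sub, (hzf i).1, hz, sub_self]
    _ = 0 := Finset.sum_const_zero
  -- Step 2
  intro P hP hPidem
  set Q := 1 - P with hQdef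
  have hQmem : Q ∈ structuralMatrixAlgebra ρ := sma_sub h1 hP
  have hQidem : Q * Q = Q := by
    have hexp : (1 - P) * (1 - P) = 1 - P - P + P * P := by noncomm_ring
    rw [hQdef, hexp, hPidem]
    abel
  have hPQ : P * Q = 0 := by rw [hQdef, mul_sub, mul_one, hPidem, sub_self]
  have hQP : Q * P = 0 := by rw [hQdef, sub_mul, one_mul, hPidem, sub_self]
  have hPQ1 : P + Q = 1 := by rw [hQdef]; abel
  set p := φ P with hpdef
  set q := φ Q with hqdef
  have hp : p * p = p := idem_tr P hP hPidem
  have hq : q * q = q := idem_tr Q hQmem hQidem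
  have hrkPQ : rk P + rk Q = n := by
    have htr : P.trace + Q.trace = (n : ℂ) := by
      rw [← Matrix.trace_add, hPQ1, Matrix.trace_one, Fintype.card_fin]
    rw [trace_eq_rk hPidem, trace_eq_rk hQidem] at htr
    exact_mod_cast htr
  obtain ⟨g, hgmem, hgidem, hgnz, hgorth, hPg, hgP, hgsum⟩ :=
    decomp hrefl htrans (rk P) P hP hPidem (trace_eq_rk hPidem)
  obtain ⟨h, hhmem, hhidem, hhnz, hhorth, hQh, hhQ, hhsum⟩ :=
    decomp hrefl htrans (rk Q) Q hQmem hQidem (trace_eq_rk hQidem)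
  -- cross orthogonality
  have hgh : ∀ i j, g i * h j = 0 := by
    intro i j
    have e1 : g i * h j = g i * P * (Q * h j) := by rw [hgP i, hQh j]
    have e2 : g i * P * (Q * h j) = g i * (P * Q * h j) := by simp only [mul_assoc]
    rw [e1, e2, hPQ, zero_mul, mul_zero]
  have hhg : ∀ i j, h j * g i = 0 := by
    intro i j
    have e1 : h j * g i = h j * Q * (P * g i) := by rw [hhQ j, hPg i]
    have e2 : h j * Q * (P * g i) = h j * (Q * P * g i) := by simp only [mul_assoc]
    rw [e1, e2, hQP, zero_mul, mul_zero]
  -- the combined image family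
  set F : Fin (rk P) ⊕ Fin (rk Q) → Mat n :=
    Sum.elim (fun i => φ (g i)) (fun j => φ (h j)) with hFdef
  have hFidem : ∀ x, F x * F x = F x := by
    rintro (i | j)
    · exact idem_tr _ (hgmem i) (hgidem i)
    · exact idem_tr _ (hhmem j) (hhidem j)
  have hFnz : ∀ x, F x ≠ 0 := by
    rintro (i | j)
    · show φ (g i) ≠ 0
      rw [← hz0, hzdef]
      exact hinj.ne (hgmem i) h0 (hgnz i)
    · show φ (h j) ≠ 0
      rw [← hz0, hzdef]
      exact hinj.ne (hhmem j) h0 (hhnz j)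
  have zero_tr' : ∀ X ∈ structuralMatrixAlgebra ρ, ∀ Y ∈ structuralMatrixAlgebra ρ,
      X * Y = 0 → Y * X = 0 → (φ X) * (φ Y) + (φ Y) * (φ X) = 0 := by
    intro X hX Y hY hXY hYX
    have := zero_tr X hX Y hY hXY hYX
    rw [hz0, add_zero] at this
    exact this
  have hForth : ∀ x y, x ≠ y → F x * F y = 0 := by
    rintro (i | j) (i' | j') hxy
    · have hne : i ≠ i' := fun hc => hxy (by rw [hc])
      exact (orth_lemma (hFidem (Sum.inl i'))
        (zero_tr' _ (hgmem i) _ (hgmem i') (hgorth i i' hne) (hgorth i' i (Ne.symm hne)))).1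
    · exact (orth_lemma (hFidem (Sum.inr j'))
        (zero_tr' _ (hgmem i) _ (hhmem j') (hgh i j') (hhg i j'))).1
    · exact (orth_lemma (hFidem (Sum.inl i'))
        (zero_tr' _ (hhmem j) _ (hgmem i') (hhg i' j) (hgh i' j))).1
    · have hne : j ≠ j' := fun hc => hxy (by rw [hc])
      exact (orth_lemma (hFidem (Sum.inr j'))
        (zero_tr' _ (hhmem j) _ (hhmem j') (hhorth j j' hne) (hhorth j' j (Ne.symm hne)))).1
  have hFsum : ∑ x, F x = 1 := by
    apply sum_eq_one _ F hFidem hFnz hForth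
    simp [hrkPQ]
  have hFsplit : ∑ x, F x = (∑ i, φ (g i)) + ∑ j, φ (h j) := Fintype.sum_sum_type F
  -- p absorbs the g-part and kills the h-part
  have hpg : ∀ i, p * φ (g i) = φ (g i) := fun i =>
    (unit_lemma hp (unit_tr P hP _ (hgmem i) (hPg i) (hgP i))).1
  have hPh : ∀ j, P * h j = 0 := by
    intro j
    rw [← hQh j, ← mul_assoc, hPQ, zero_mul]
  have hhP : ∀ j, h j * P = 0 := by
    intro j
    rw [← hhQ j, mul_assoc, hQP, mul_zero]
  have hph : ∀ j, p * φ (h j) = 0 := fun j =>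
    (orth_lemma (hFidem (Sum.inr j)) (zero_tr' P hP _ (hhmem j) (hPh j) (hhP j))).1
  have hQg : ∀ i, Q * g i = 0 := by
    intro i
    rw [← hPg i, ← mul_assoc, hQP, zero_mul]
  have hgQ : ∀ i, g i * Q = 0 := by
    intro i
    rw [← hgP i, mul_assoc, hPQ, mul_zero]
  have hqh : ∀ j, q * φ (h j) = φ (h j) := fun j =>
    (unit_lemma hq (unit_tr Q hQmem _ (hhmem j) (hQh j) (hhQ j))).1
  have hqg : ∀ i, q * φ (g i) = 0 := fun i =>
    (orth_lemma (hFidem (Sum.inl i)) (zero_tr' Q hQmem _ (hgmem i) (hQg i) (hgQ i))).1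
  have hpsum : p = ∑ i, φ (g i) := by
    calc p = p * 1 := (mul_one p).symm
    _ = p * ((∑ i, φ (g i)) + ∑ j, φ (h j)) := by rw [← hFsplit, hFsum]
    _ = (∑ i, p * φ (g i)) + ∑ j, p * φ (h j) := by rw [mul_add, Finset.mul_sum, Finset.mul_sum]
    _ = (∑ i, φ (g i)) + ∑ j, (0 : Mat n) := by
        rw [Finset.sum_congr rfl fun i _ => hpg i, Finset.sum_congr rfl fun j _ => hph j]
    _ = ∑ i, φ (g i) := by rw [Finset.sum_const_zero, add_zero]
  have hqsum : q = ∑ j, φ (h j) := by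
    calc q = q * 1 := (mul_one q).symm
    _ = q * ((∑ i, φ (g i)) + ∑ j, φ (h j)) := by rw [← hFsplit, hFsum]
    _ = (∑ i, q * φ (g i)) + ∑ j, q * φ (h j) := by rw [mul_add, Finset.mul_sum, Finset.mul_sum]
    _ = (∑ _i : Fin (rk P), (0 : Mat n)) + ∑ j, φ (h j) := by
        rw [Finset.sum_congr rfl fun i _ => hqg i, Finset.sum_congr rfl fun j _ => hqh j]
    _ = ∑ j, φ (h j) := by rw [Finset.sum_const_zero, zero_add]
  have hfinal : p + q = 1 := by
    rw [hpsum, hqsum, ← hFsplit, hFsum]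
  show q = 1 - p
  exact eq_sub_of_add_eq' hfinal
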